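/- Let λ_i : E → ℝ≥0 be continuous switching rates, i = 1,...,d, on E = ℝ^d × {-1,1}^d, and let Ψ ∈ C¹(ℝ^d). Then the identity λ_i(ξ,θ) - λ_i(ξ, F_i[θ]) = θ_i ∂_i Ψ(ξ) holds for all (ξ,θ) ∈ E and all i if and only if there exist continuous functions γ_i : E → ℝ≥0 with γ_i(ξ,θ) = γ_i(ξ, F_i[θ]) such that λ_i(ξ,θ) = (θ_i ∂_i Ψ(ξ))^+ + γ_i(ξ,θ) for all (ξ,θ) ∈ E. -/

import Mathlib

lemma max_zero_sub_max_zero_neg (a : ℝ) : max 0 a - max 0 (-a) = a := by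
  rcases le_total 0 a with h | h
  · rw [max_eq_right h, max_eq_left (by linarith)]; ring
  · rw [max_eq_left h, max_eq_right (by linarith)]; ring

/-- Characterization of switching rates satisfying the Zig-Zag invariance identity
(Proposition 1): continuous nonnegative rates `lam` satisfy
`lam i (ξ,θ) - lam i (ξ, F_i[θ]) = θ i * ∂_i Ψ(ξ)` for all `(ξ,θ) ∈ E` and `i`
if and only if `lam i (ξ,θ) = (θ i * ∂_i Ψ(ξ))⁺ + γ i (ξ,θ)` for continuous
nonnegative `γ` with `γ i (ξ,θ) = γ i (ξ, F_i[θ])`. -/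
theorem zigzag_rate_characterization {d : ℕ}
    (Ψ : (Fin d → ℝ) → ℝ) (hΨ : ContDiff ℝ 1 Ψ)
    (hint : MeasureTheory.Integrable (fun ξ => Real.exp (-Ψ ξ)))
    (lam : Fin d → (Fin d → ℝ) → (Fin d → ℝ) → ℝ)
    (hlam_cont : ∀ i θ, Continuous (fun ξ => lam i ξ θ))
    (hlam_nonneg : ∀ i ξ θ, 0 ≤ lam i ξ θ) :
    (∀ (ξ : Fin d → ℝ) (θ : Fin d → ℝ), (∀ j, θ j = 1 ∨ θ j = -1) →
        ∀ i, lam i ξ θ - lam i ξ (Function.update θ i (-θ i)) =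
          θ i * fderiv ℝ Ψ ξ (Pi.single i 1)) ↔
      (∃ γ : Fin d → (Fin d → ℝ) → (Fin d → ℝ) → ℝ,
        (∀ i θ, Continuous (fun ξ => γ i ξ θ)) ∧
        (∀ i ξ θ, 0 ≤ γ i ξ θ) ∧
        (∀ (ξ : Fin d → ℝ) (θ : Fin d → ℝ), (∀ j, θ j = 1 ∨ θ j = -1) →
          ∀ i, γ i ξ θ = γ i ξ (Function.update θ i (-θ i))) ∧
        (∀ (ξ : Fin d → ℝ) (θ : Fin d → ℝ), (∀ j, θ j = 1 ∨ θ j = -1) →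
          ∀ i, lam i ξ θ =
            max 0 (θ i * fderiv ℝ Ψ ξ (Pi.single i 1)) + γ i ξ θ)) := by
  constructor
  · intro h
    refine ⟨fun i ξ θ =>
      max 0 (lam i ξ θ - max 0 (θ i * fderiv ℝ Ψ ξ (Pi.single i 1))), ?_, ?_, ?_, ?_⟩
    · intro i θ
      have hd : Continuous fun ξ => fderiv ℝ Ψ ξ (Pi.single i 1) :=
        (hΨ.continuous_fderiv one_ne_zero).clm_apply continuous_const
      exact continuous_const.max
        ((hlam_cont i θ).sub (continuous_const.max (continuous_const.mul hd)))
    · intro i ξ θ; exact le_max_left _ _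
    · intro ξ θ hθ i
      have key := h ξ θ hθ i
      have hu : (Function.update θ i (-θ i)) i = -θ i := Function.update_self _ _ _
      dsimp only
      rw [hu]
      have hm := max_zero_sub_max_zero_neg (θ i * fderiv ℝ Ψ ξ (Pi.single i 1))
      have harg : lam i ξ θ - max 0 (θ i * fderiv ℝ Ψ ξ (Pi.single i 1)) =
          lam i ξ (Function.update θ i (-θ i)) -
            max 0 (-θ i * fderiv ℝ Ψ ξ (Pi.single i 1)) := by
        have : -θ i * fderiv ℝ Ψ ξ (Pi.single i 1) =
            -(θ i * fderiv ℝ Ψ ξ (Pi.single i 1)) := by ring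
        rw [this]; linarith
      rw [harg]
    · intro ξ θ hθ i
      have key := h ξ θ hθ i
      have h1 : θ i * fderiv ℝ Ψ ξ (Pi.single i 1) ≤ lam i ξ θ := by
        have := hlam_nonneg i ξ (Function.update θ i (-θ i)); linarith
      have h2 : max 0 (θ i * fderiv ℝ Ψ ξ (Pi.single i 1)) ≤ lam i ξ θ :=
        max_le (hlam_nonneg i ξ θ) h1
      dsimp only
      rw [max_eq_right (by linarith : (0:ℝ) ≤ lam i ξ θ -
        max 0 (θ i * fderiv ℝ Ψ ξ (Pi.single i 1)))]
      ring
  · rintro ⟨γ, hγc, hγn, hγf, hdec⟩ ξ θ hθ i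
    have hθ' : ∀ j, (Function.update θ i (-θ i)) j = 1 ∨
        (Function.update θ i (-θ i)) j = -1 := by
      intro j
      rcases eq_or_ne j i with rfl | hj
      · rw [Function.update_self]
        rcases hθ j with h | h <;> simp [h]
      · rw [Function.update_of_ne hj]; exact hθ j
    have h1 := hdec ξ θ hθ i
    have h2 := hdec ξ _ hθ' i
    have h3 := hγf ξ θ hθ i
    rw [Function.update_self] at h2
    have hm := max_zero_sub_max_zero_neg (θ i * fderiv ℝ Ψ ξ (Pi.single i 1))
    have hneg : -θ i * fderiv ℝ Ψ ξ (Pi.single i 1) =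
        -(θ i * fderiv ℝ Ψ ξ (Pi.single i 1)) := by ring
    rw [hneg] at h2
    linarith
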